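/- Let q ≥ 2 be an integer, x irrational, and 𝒪 the closure of the T_q-orbit of x in ℝ/ℤ. Then the sequence ℓ_n from the difference-set construction can be chosen so that gcd(ℓ_n, q) = gcd(ℓ_1, q) for all n; in particular if q is prime, gcd(ℓ_n, q) = 1 for all n. -/

import Mathlib

open Pointwise

noncomputable section

namespace GcdAuxiliary

open Set

/-- norm of a real coercion with small absolute value -/
lemma ua_norm_coe {r : ℝ} (h : |r| ≤ 1/2) : ‖(r : UnitAddCircle)‖ = |r| := by
  rw [UnitAddCircle.norm_eq]
  rcases lt_or_eq_of_le h with h' | h'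
  · have : round r = 0 := by
      rw [round_eq_zero_iff]
      constructor
      · linarith [neg_abs_le r]
      · linarith [le_abs_self r]
    simp [this]
  · have habs : r = 1/2 ∨ r = -(1/2) := abs_eq (by norm_num : (0:ℝ) ≤ 1/2) |>.mp h'
    rcases habs with rfl | rfl
    · norm_num [round_eq]
    · norm_num [round_eq]

lemma ua_exists_rep (u : UnitAddCircle) : ∃ r : ℝ, (r : UnitAddCircle) = u ∧ |r| = ‖u‖ ∧ |r| ≤ 1/2 := by
  obtain ⟨s, rfl⟩ : ∃ s : ℝ, (s : UnitAddCircle) = u := Quotient.exists_rep u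
  refine ⟨s - round s, ?_, ?_, abs_sub_round s⟩
  · have : ((round s : ℝ) : UnitAddCircle) = 0 := by
      rw [AddCircle.coe_eq_zero_iff]
      exact ⟨round s, by simp⟩
    rw [sub_eq_add_neg, AddCircle.coe_add]
    simp [this]
  · rw [UnitAddCircle.norm_eq]

lemma ua_nsmul_norm {q : ℕ} (hq : 1 ≤ q) {u : UnitAddCircle} (h : ‖u‖ ≤ 1/(2*q)) :
    ‖q • u‖ = q * ‖u‖ := by
  obtain ⟨r, rfl, hr, hr2⟩ := ua_exists_rep u
  have hq0 : (0:ℝ) < q := by exact_mod_cast hq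
  have h2 : |(q:ℝ) * r| ≤ 1/2 := by
    rw [abs_mul, abs_of_nonneg hq0.le]
    rw [hr]
    calc (q:ℝ) * ‖((r:ℝ) : UnitAddCircle)‖ ≤ (q:ℝ) * (1/(2*q)) := by
          exact mul_le_mul_of_nonneg_left h hq0.le
      _ = 1/2 := by field_simp
  have hsm : (q : ℕ) • ((r : ℝ) : UnitAddCircle) = (((q:ℝ) * r : ℝ) : UnitAddCircle) := by
    rw [← AddCircle.coe_nsmul]
    norm_num
  rw [hsm, ua_norm_coe h2, abs_mul, abs_of_nonneg hq0.le, hr]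

lemma ua_nsmul_dist {q : ℕ} (hq : 1 ≤ q) {a b : UnitAddCircle} (h : dist a b ≤ 1/(2*q)) :
    dist (q • a) (q • b) = q * dist a b := by
  rw [dist_eq_norm] at *
  rw [← smul_sub]
  rw [dist_eq_norm]
  exact ua_nsmul_norm hq h

lemma ua_nsmul_dist_le (q : ℕ) (a b : UnitAddCircle) :
    dist (q • a) (q • b) ≤ q * dist a b := by
  rw [dist_eq_norm, dist_eq_norm, ← smul_sub]
  exact norm_nsmul_le

lemma ua_torsion_rep {M : ℕ} (hM : 0 < M) {u : UnitAddCircle} (h : M • u = 0) (hu : u ≠ 0) :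
    ∃ L : ℕ, 1 ≤ L ∧ L < M ∧ u = (((L : ℝ)/(M : ℝ) : ℝ) : UnitAddCircle) := by
  haveI : Fact ((0:ℝ) < 1) := ⟨zero_lt_one⟩
  set r : ℝ := (AddCircle.equivIco 1 0 u : ℝ) with hrdef
  have hmem : r ∈ Ico (0:ℝ) (0 + 1) := (AddCircle.equivIco 1 0 u).2
  have hcoe : ((r : ℝ) : UnitAddCircle) = u := (AddCircle.equivIco 1 0).symm_apply_apply u
  have hM0 : (0:ℝ) < M := by exact_mod_cast hM
  have h0 : (((M : ℝ) * r : ℝ) : UnitAddCircle) = 0 := by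
    rw [show ((M:ℝ) * r) = (M:ℕ) • r by simp, AddCircle.coe_nsmul, hcoe, h]
  obtain ⟨z, hz⟩ := (AddCircle.coe_eq_zero_iff _).mp h0
  simp only [zsmul_eq_mul, mul_one] at hz
  have hz0 : 0 ≤ z := by
    have : (0:ℝ) ≤ (z:ℝ) := by rw [hz]; exact mul_nonneg hM0.le hmem.1
    exact_mod_cast this
  have hzM : z < M := by
    have : (z:ℝ) < M := by
      rw [hz]
      calc (M:ℝ) * r < M * 1 := by
            apply mul_lt_mul_of_pos_left _ hM0
            simpa using hmem.2
        _ = M := mul_one _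
    exact_mod_cast this
  have hzpos : 0 < z := by
    rcases lt_or_eq_of_le hz0 with h' | h'
    · exact h'
    · exfalso
      apply hu
      have : r = 0 := by
        have : (M:ℝ) * r = 0 := by rw [← hz, ← h']; simp
        rcases mul_eq_zero.mp this with h'' | h''
        · exact absurd h'' (ne_of_gt hM0)
        · exact h''
      rw [← hcoe, this]
      simp
  refine ⟨z.toNat, ?_, ?_, ?_⟩
  · omega
  · omega
  · rw [← hcoe]
    congr 1
    have : ((z.toNat : ℤ) : ℝ) = (z : ℝ) := by congr 1; omega
    push_cast at this ⊢
    rw [this]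
    rw [eq_div_iff (ne_of_gt hM0), mul_comm]
    exact hz.symm

lemma finite_sep {X : Type*} [MetricSpace X] {s : Set X} (hs : s.Finite) :
    ∃ ρ > 0, ∀ p ∈ s, ∀ r ∈ s, p ≠ r → ρ ≤ dist p r := by
  classical
  set t : Finset ℝ := ((hs.toFinset ×ˢ hs.toFinset).filter fun pr => pr.1 ≠ pr.2).image
      (fun pr => dist pr.1 pr.2) with ht
  by_cases hne : t.Nonempty
  · refine ⟨t.min' hne, ?_, ?_⟩
    · obtain ⟨pr, hpr, heq⟩ := Finset.mem_image.mp (t.min'_mem hne)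
      rw [Finset.mem_filter] at hpr
      rw [← heq]
      exact dist_pos.mpr hpr.2
    · intro p hp r hr hne'
      apply t.min'_le
      apply Finset.mem_image.mpr
      exact ⟨(p, r), Finset.mem_filter.mpr ⟨Finset.mem_product.mpr
        ⟨hs.mem_toFinset.mpr hp, hs.mem_toFinset.mpr hr⟩, hne'⟩, rfl⟩
  · refine ⟨1, one_pos, ?_⟩
    intro p hp r hr hne'
    exfalso
    apply hne
    exact ⟨dist p r, Finset.mem_image.mpr ⟨(p, r), Finset.mem_filter.mpr ⟨Finset.mem_product.mpr
      ⟨hs.mem_toFinset.mpr hp, hs.mem_toFinset.mpr hr⟩, hne'⟩, rfl⟩⟩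

lemma iter_smul (q : ℕ) (m : ℕ) (y : UnitAddCircle) :
    (fun z : UnitAddCircle => q • z)^[m] y = q^m • y := by
  induction m with
  | zero => simp
  | succ m ih =>
      rw [Function.iterate_succ_apply', ih, smul_smul, ← pow_succ']

lemma irr_smul_ne {q : ℕ} (hq : 2 ≤ q) {x : ℝ} (hx : Irrational x) {a b : ℕ} (h : a < b) :
    (q^b • ((x:ℝ) : UnitAddCircle)) ≠ q^a • ((x:ℝ) : UnitAddCircle) := by
  intro heq
  have h1 : ((((q^b : ℕ) : ℝ) * x : ℝ) : UnitAddCircle) = (((q^a : ℕ) : ℝ) * x : ℝ) := by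
    rw [show (((q^b:ℕ):ℝ) * x) = (q^b : ℕ) • x by simp, show (((q^a:ℕ):ℝ) * x) = (q^a : ℕ) • x by simp,
      AddCircle.coe_nsmul, AddCircle.coe_nsmul, heq]
  have h2 : ((((q^b : ℕ) : ℝ) * x - ((q^a : ℕ) : ℝ) * x : ℝ) : UnitAddCircle) = 0 := by
    rw [sub_eq_add_neg, AddCircle.coe_add, h1, AddCircle.coe_neg, add_neg_cancel]
  obtain ⟨z, hz⟩ := (AddCircle.coe_eq_zero_iff _).mp h2
  simp only [zsmul_eq_mul, mul_one] at hz
  set c : ℕ := q^b - q^a with hc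
  have hqmono : q^a < q^b := Nat.pow_lt_pow_right (by omega) h
  have hc0 : 0 < c := by omega
  have hcr : ((c:ℕ):ℝ) = ((q^b : ℕ) : ℝ) - ((q^a : ℕ):ℝ) := by
    push_cast [hc, Nat.cast_sub hqmono.le]; ring
  have hxval : x = (z : ℝ) / (c : ℝ) := by
    have hcne : ((c:ℕ):ℝ) ≠ 0 := by exact_mod_cast hc0.ne'
    rw [eq_div_iff hcne, mul_comm, hcr, sub_mul, ← hz]
  exact hx ⟨(z : ℚ) / (c : ℚ), by push_cast [hxval]; ring⟩

lemma exists_period {q : ℕ} {W : Set UnitAddCircle} (hfin : W.Finite)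
    (hTW : (fun y : UnitAddCircle => q • y) '' W = W) :
    ∃ P : ℕ, 1 ≤ P ∧ ∀ p ∈ W, q^P • p = p := by
  classical
  set T : UnitAddCircle → UnitAddCircle := fun y => q • y with hT
  have hmaps : MapsTo T W W := by
    intro p hp; rw [← hTW]; exact ⟨p, hp, rfl⟩
  have hsurj : SurjOn T W W := by rw [SurjOn, hTW]
  have hbij : BijOn T W W := (hfin.surjOn_iff_bijOn_of_mapsTo hmaps).mp hsurj
  have hinj : InjOn T W := hbij.injOn
  have cancel : ∀ i (y z : UnitAddCircle), y ∈ W → z ∈ W → T^[i] y = T^[i] z → y = z := by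
    intro i
    induction i with
    | zero => intro y z _ _ h; simpa using h
    | succ i ih =>
        intro y z hy hz h
        rw [Function.iterate_succ_apply', Function.iterate_succ_apply'] at h
        have := hinj ((hmaps.iterate i) hy) ((hmaps.iterate i) hz) h
        exact ih y z hy hz this
  have hper : ∀ p ∈ W, ∃ d : ℕ, 1 ≤ d ∧ T^[d] p = p := by
    intro p hp
    haveI : Finite W := hfin.to_subtype
    have : ∃ k k' : ℕ, k ≠ k' ∧ (⟨T^[k] p, (hmaps.iterate k) hp⟩ : W) = ⟨T^[k'] p, (hmaps.iterate k') hp⟩ := by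
      obtain ⟨k, k', hkk, he⟩ := Finite.exists_ne_map_eq_of_infinite
        (fun k : ℕ => (⟨T^[k] p, (hmaps.iterate k) hp⟩ : W))
      exact ⟨k, k', hkk, he⟩
    obtain ⟨k, k', hkk, he⟩ := this
    rcases Nat.lt_or_ge k k' with hlt | hge
    · refine ⟨k' - k, by omega, ?_⟩
      have he' : T^[k] p = T^[k] (T^[k'-k] p) := by
        rw [← Function.iterate_add_apply]
        have : k + (k' - k) = k' := by omega
        rw [this]
        exact (Subtype.ext_iff.mp he)
      exact (cancel k p (T^[k'-k] p) hp ((hmaps.iterate _) hp) he').symm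
    · have hlt : k' < k := by omega
      refine ⟨k - k', by omega, ?_⟩
      have he' : T^[k'] p = T^[k'] (T^[k-k'] p) := by
        rw [← Function.iterate_add_apply]
        have : k' + (k - k') = k := by omega
        rw [this]
        exact (Subtype.ext_iff.mp he).symm
      exact (cancel k' p (T^[k-k'] p) hp ((hmaps.iterate _) hp) he').symm
  choose d hd1 hdfix using hper
  by_cases hne : W.Nonempty
  · set P : ℕ := ∏ p ∈ hfin.toFinset.attach, d p.1 (hfin.mem_toFinset.mp p.2) with hP
    have hP1 : 1 ≤ P := by
      apply Finset.one_le_prod'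
      intro i _
      exact hd1 _ _
    refine ⟨P, hP1, ?_⟩
    intro p hp
    have hdvd : d p hp ∣ P := by
      have := Finset.dvd_prod_of_mem
        (fun i : {x // x ∈ hfin.toFinset} => d i.1 (hfin.mem_toFinset.mp i.2))
        (Finset.mem_attach hfin.toFinset ⟨p, hfin.mem_toFinset.mpr hp⟩)
      exact this
    obtain ⟨m, hm⟩ := hdvd
    have hiter : T^[P] p = p := by
      rw [hm, Function.iterate_mul]
      clear hm hP
      induction m with
      | zero => simp
      | succ m ih => rw [Function.iterate_succ_apply', ih, hdfix p hp]
    rw [← iter_smul q P p]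
    exact hiter
  · refine ⟨1, le_rfl, ?_⟩
    intro p hp
    exact absurd ⟨p, hp⟩ hne

lemma exists_collision {q : ℕ} (hq : 2 ≤ q) {W : Set UnitAddCircle} (hWc : IsCompact W)
    (hWinf : W.Infinite) (hTW : (fun y : UnitAddCircle => q • y) '' W = W) :
    ∃ u ∈ W, ∃ v ∈ W, u ≠ v ∧ q • u = q • v := by
  classical
  by_contra hcon
  push_neg at hcon
  haveI : CompactSpace W := isCompact_iff_compactSpace.mp hWc
  have hq0 : (0:ℝ) < q := by exact_mod_cast (by omega : 0 < q)
  have hq1 : (1:ℝ) < q := by exact_mod_cast (by omega : 1 < q)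
  have hmaps : ∀ w : W, q • (w : UnitAddCircle) ∈ W := by
    intro w
    have hmem : q • (w : UnitAddCircle) ∈ (fun y : UnitAddCircle => q • y) '' W := ⟨w, w.2, rfl⟩
    rwa [hTW] at hmem
  set f : W → W := fun w => ⟨q • (w : UnitAddCircle), hmaps w⟩ with hf
  have hfcont : Continuous f :=
    Continuous.subtype_mk ((continuous_nsmul q).comp continuous_subtype_val) _
  have hfinj : Function.Injective f := by
    intro w w' h
    have hval : q • (w : UnitAddCircle) = q • (w' : UnitAddCircle) := congrArg Subtype.val h
    by_contra hne
    exact hcon w.1 w.2 w'.1 w'.2 (fun hh => hne (Subtype.ext hh)) hval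
  have hfsurj : Function.Surjective f := by
    intro w
    have hw : (w : UnitAddCircle) ∈ (fun y : UnitAddCircle => q • y) '' W := by
      rw [hTW]; exact w.2
    obtain ⟨v, hv, hqv⟩ := hw
    exact ⟨⟨v, hv⟩, Subtype.ext hqv⟩
  let e : W ≃ W := Equiv.ofBijective f ⟨hfinj, hfsurj⟩
  let h : W ≃ₜ W := Continuous.homeoOfEquivCompactToT2 (f := e) hfcont
  set g : W → W := ⇑h.symm with hg
  have hgf : ∀ w : W, g (f w) = w := fun w => h.symm_apply_apply w
  have hfg : ∀ w : W, f (g w) = w := fun w => h.apply_symm_apply w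
  have hgu : UniformContinuous g := CompactSpace.uniformContinuous_of_continuous h.symm.continuous
  obtain ⟨δ0, hδ0, hδprop⟩ := Metric.uniformContinuous_iff.mp hgu (1/(2*q)) (by positivity)
  set δ : ℝ := min δ0 (1/(2*q)) with hδdef
  have hδpos : 0 < δ := lt_min hδ0 (by positivity)
  have key1 : ∀ w w' : W, dist w w' < δ → dist (g w) (g w') = dist w w' / q ∧ dist (g w) (g w') < δ := by
    intro w w' hd
    have h1 : dist (g w) (g w') < 1/(2*q) := hδprop (lt_of_lt_of_le hd (min_le_left _ _))
    have h2 : dist ((g w) : UnitAddCircle) ((g w') : UnitAddCircle) ≤ 1/(2*q) := by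
      rw [← Subtype.dist_eq]; exact h1.le
    have h3 : dist (q • ((g w) : UnitAddCircle)) (q • ((g w') : UnitAddCircle))
        = q * dist ((g w) : UnitAddCircle) ((g w') : UnitAddCircle) :=
      ua_nsmul_dist (by omega) h2
    have h4 : dist (f (g w)) (f (g w')) = q * dist (g w) (g w') := by
      rw [Subtype.dist_eq, Subtype.dist_eq]
      exact h3
    rw [hfg, hfg] at h4
    have heq : dist (g w) (g w') = dist w w' / q := by
      rw [h4]; field_simp
    refine ⟨heq, ?_⟩
    rw [heq]
    calc dist w w' / q ≤ dist w w' / 1 := by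
          apply div_le_div_of_nonneg_left dist_nonneg ?_ ?_ <;> [skip; linarith] <;> norm_num
      _ = dist w w' := div_one _
      _ < δ := hd
  have keyn : ∀ (n : ℕ) (w w' : W), dist w w' < δ →
      dist (g^[n] w) (g^[n] w') = dist w w' / q^n ∧ dist (g^[n] w) (g^[n] w') < δ := by
    intro n
    induction n with
    | zero => intro w w' hd; simpa using hd
    | succ n ih =>
        intro w w' hd
        obtain ⟨he, hlt⟩ := key1 w w' hd
        obtain ⟨he2, hlt2⟩ := ih (g w) (g w') hlt
        constructor
        · rw [Function.iterate_succ_apply, Function.iterate_succ_apply, he2, he,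
            div_div, ← pow_succ']
        · rwa [Function.iterate_succ_apply, Function.iterate_succ_apply]
  obtain ⟨t, htsub, htfin, hcov⟩ := (isCompact_univ (X := W)).finite_cover_balls (e := δ) hδpos
  set E : Finset W := htfin.toFinset with hE
  have cover : ∀ (w : W) (n : ℕ), ∃ e ∈ E, dist w (g^[n] e) < δ / q^n := by
    intro w n
    obtain ⟨e, he, hball⟩ := mem_iUnion₂.mp (hcov (mem_univ (f^[n] w)))
    have hd : dist (f^[n] w) e < δ := Metric.mem_ball.mp hball
    obtain ⟨heq, _⟩ := keyn n (f^[n] w) e hd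
    have hgfn : g^[n] (f^[n] w) = w := (Function.LeftInverse.iterate hgf n) w
    refine ⟨e, htfin.mem_toFinset.mpr he, ?_⟩
    have : dist (g^[n] (f^[n] w)) (g^[n] e) = dist (f^[n] w) e / q^n := heq
    rw [hgfn] at this
    rw [this]
    gcongr
  haveI : Infinite W := hWinf.to_subtype
  obtain ⟨A, hAsub, hAcard⟩ := (Set.infinite_univ (α := W)).exists_subset_card_eq (E.card + 1)
  obtain ⟨ρ, hρpos, hρ⟩ := finite_sep (A.finite_toSet)
  obtain ⟨n, hn⟩ := pow_unbounded_of_one_lt (2*δ/ρ) hq1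
  choose χ hχE hχd using fun a : W => cover a n
  obtain ⟨a, ha, b, hb, hab, hfeq⟩ :=
    Finset.exists_ne_map_eq_of_card_lt_of_maps_to (by omega) (fun a (_ : a ∈ A) => hχE a)
  have hqn : (0:ℝ) < (q:ℝ)^n := by positivity
  have h1 : dist a b < 2 * δ / q^n := by
    calc dist a b ≤ dist a (g^[n] (χ a)) + dist (g^[n] (χ b)) b := by
          rw [hfeq]; exact dist_triangle _ _ _
      _ < δ / q^n + δ / q^n := by
          apply add_lt_add (hχd a)
          rw [dist_comm]; exact hχd b
      _ = 2 * δ / q^n := by ring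
  have h2 : ρ ≤ dist a b := hρ a (Finset.mem_coe.mpr ha) b (Finset.mem_coe.mpr hb) hab
  have h3 : 2 * δ < ρ * (q:ℝ)^n := by
    have := (div_lt_iff₀ hρpos).mp hn
    linarith [this]
  have h4 : ρ * (q:ℝ)^n < 2 * δ := (lt_div_iff₀ hqn).mp (lt_of_le_of_lt h2 h1)
  linarith

end GcdAuxiliary

open GcdAuxiliary Set in
/-- The rational points `ℓₙ/qⁿ` in the difference set of the orbit closure can be
chosen compatibly (`q · (ℓ_{n+1}/q^{n+1}) ≡ ℓₙ/qⁿ mod 1`), and then `gcd(ℓₙ, q)`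
is independent of `n`; in particular if `q` is prime, `gcd(ℓₙ, q) = 1`. -/
theorem gcd_of_compatible_rational_points
    (q : ℕ) (hq : 2 ≤ q) (x : ℝ) (hx : Irrational x) :
    ∃ ℓ : ℕ → ℕ,
      (∀ n : ℕ, 1 ≤ n → 1 ≤ ℓ n ∧ ℓ n ≤ q ^ n - 1) ∧
      (∀ n : ℕ, 1 ≤ n →
        ((((ℓ n : ℝ) / (q : ℝ) ^ n : ℝ) : UnitAddCircle) ∈
          closure {y : UnitAddCircle | ∃ m : ℕ, y = q ^ m • (x : UnitAddCircle)} -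
          closure {y : UnitAddCircle | ∃ m : ℕ, y = q ^ m • (x : UnitAddCircle)})) ∧
      (∀ n : ℕ, 1 ≤ n →
        (q • (((ℓ (n + 1) : ℝ) / (q : ℝ) ^ (n + 1) : ℝ) : UnitAddCircle) =
          (((ℓ n : ℝ) / (q : ℝ) ^ n : ℝ) : UnitAddCircle))) ∧
      (∀ n : ℕ, 1 ≤ n → Nat.gcd (ℓ n) q = Nat.gcd (ℓ 1) q) ∧
      (Nat.Prime q → ∀ n : ℕ, 1 ≤ n → Nat.gcd (ℓ n) q = 1) := by
  classical
  set ξ : UnitAddCircle := ((x : ℝ) : UnitAddCircle) with hξ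
  set O : Set UnitAddCircle := {y : UnitAddCircle | ∃ m : ℕ, y = q ^ m • (x : UnitAddCircle)} with hO
  set S : Set UnitAddCircle := closure O with hS
  set T : UnitAddCircle → UnitAddCircle := fun y => q • y with hT
  have hTcont : Continuous T := continuous_nsmul q
  have hScl : IsClosed S := isClosed_closure
  have hScomp : IsCompact S := hScl.isCompact
  have hTO : T '' O ⊆ O := by
    rintro - ⟨-, ⟨m, rfl⟩, rfl⟩
    exact ⟨m+1, by rw [hT]; simp only [smul_smul, ← pow_succ']⟩
  have hTS : T '' S ⊆ S := by
    refine subset_trans (image_closure_subset_closure_image hTcont) ?_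
    exact closure_mono hTO
  set A : ℕ → Set UnitAddCircle := fun k => (fun y => q^k • y) '' S with hA
  have hA0 : A 0 = S := by
    rw [hA]
    simp
  have hAsucc : ∀ k, A (k+1) = T '' A k := by
    intro k
    rw [hA, hT, image_image]
    apply image_congr
    intro a _
    rw [smul_smul, ← pow_succ']
  have hAcomp : ∀ k, IsCompact (A k) := fun k => hScomp.image (continuous_nsmul _)
  have hAcl : ∀ k, IsClosed (A k) := fun k => (hAcomp k).isClosed
  have hTA : ∀ k, T '' A k ⊆ A k := by
    intro k
    induction k with
    | zero => rw [hA0]; exact hTS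
    | succ k ih =>
        rw [hAsucc k]
        exact image_mono ih
  have hAdec : ∀ k, A (k+1) ⊆ A k := by
    intro k
    rw [hAsucc k]
    exact hTA k
  have hAanti : ∀ {j k}, j ≤ k → A k ⊆ A j := by
    intro j k hjk
    induction k with
    | zero => have : j = 0 := by omega
              subst this; exact subset_rfl
    | succ k ih =>
        rcases Nat.lt_or_ge j (k+1) with h | h
        · exact subset_trans (hAdec k) (ih (by omega))
        · have : j = k+1 := by omega
          subst this; exact subset_rfl
  set W : Set UnitAddCircle := ⋂ k, A k with hW
  have hWS : W ⊆ S := by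
    rw [← hA0]
    exact iInter_subset A 0
  have hWcl : IsClosed W := isClosed_iInter hAcl
  have hWcomp : IsCompact W := hWcl.isCompact
  have hTW : T '' W = W := by
    apply Subset.antisymm
    · rintro - ⟨w, hw, rfl⟩
      apply mem_iInter.mpr
      intro k
      apply hAdec k
      rw [hAsucc k]
      exact ⟨w, mem_iInter.mp hw (k+1) |> (fun h => hAanti (by omega) h), rfl⟩
    · intro w hw
      set C : ℕ → Set UnitAddCircle := fun k => A k ∩ T ⁻¹' {w} with hC
      have hCne : ∀ k, (C k).Nonempty := by
        intro k
        have hwk : w ∈ A (k+1) := mem_iInter.mp hw (k+1)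
        rw [hAsucc k] at hwk
        obtain ⟨v, hv, hqv⟩ := hwk
        exact ⟨v, hv, by simp [hqv]⟩
      have hCdec : ∀ k, C (k+1) ⊆ C k := fun k => inter_subset_inter_left _ (hAdec k)
      have hCcl : ∀ k, IsClosed (C k) := fun k =>
        (hAcl k).inter (isClosed_singleton.preimage hTcont)
      obtain ⟨v, hv⟩ := IsCompact.nonempty_iInter_of_sequence_nonempty_isCompact_isClosed
        C hCdec hCne ((hAcomp 0).inter_right (isClosed_singleton.preimage hTcont)) hCcl
      have hvW : v ∈ W := mem_iInter.mpr fun k => (mem_iInter.mp hv k).1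
      have hvT : T v = w := by
        have := (mem_iInter.mp hv 0).2
        simpa using this
      exact ⟨v, hvW, hvT⟩
  -- orbit points
  set y : ℕ → UnitAddCircle := fun k => q^k • ξ with hy
  have hyA : ∀ j k, j ≤ k → y k ∈ A j := by
    intro j k hjk
    refine ⟨q^(k-j) • ξ, subset_closure ⟨k-j, rfl⟩, ?_⟩
    show q ^ j • (q ^ (k - j) • ξ) = y k
    rw [smul_smul, ← pow_add]
    have hjk' : j + (k - j) = k := by omega
    rw [hjk']
  -- W is infinite
  have hWinf : W.Infinite := by
    by_contra hfin'
    rw [Set.not_infinite] at hfin'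
    obtain ⟨P, hP1, hPer⟩ := exists_period (q := q) hfin' hTW
    have hqP1 : (1:ℝ) < (q:ℝ)^P := by
      apply one_lt_pow₀ (by exact_mod_cast (by omega : 1 < q)) (by omega)
    have hqP0 : (0:ℝ) < (q:ℝ)^P := by positivity
    have hcastP : ((q^P : ℕ) : ℝ) = (q:ℝ)^P := by push_cast; ring
    obtain ⟨ρ, hρpos, hρsep⟩ := finite_sep hfin'
    set ε : ℝ := min (1/(2*(q:ℝ)^P)) (ρ/((q:ℝ)^P + 1)) with hε
    have hεpos : 0 < ε := lt_min (by positivity) (by positivity)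
    have hε1 : ε ≤ 1/(2*(q:ℝ)^P) := min_le_left _ _
    have hε2 : ε ≤ ρ/((q:ℝ)^P + 1) := min_le_right _ _
    set U : Set UnitAddCircle := ⋃ p ∈ W, Metric.ball p ε with hU
    have hUopen : IsOpen U := isOpen_biUnion fun p _ => Metric.isOpen_ball
    obtain ⟨J, hJ⟩ : ∃ J, A J ⊆ U := by
      apply exists_subset_nhds_of_isCompact' (V := A)
        (fun i j => ⟨max i j, hAanti (le_max_left _ _), hAanti (le_max_right _ _)⟩)
        hAcomp hAcl
      intro z hz
      exact hUopen.mem_nhds (mem_iUnion₂.mpr ⟨z, hz, Metric.mem_ball_self hεpos⟩)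
    have hyU : ∀ k, J ≤ k → ∃ p ∈ W, dist (y k) p < ε := by
      intro k hk
      have : y k ∈ U := hJ (hyA J k hk)
      obtain ⟨p, hp, hball⟩ := mem_iUnion₂.mp this
      exact ⟨p, hp, Metric.mem_ball.mp hball⟩
    -- growth step
    have hyP : ∀ k, y (k + P) = (q^P : ℕ) • y k := by
      intro k
      rw [hy]
      show q ^ (k+P) • ξ = q^P • (q^k • ξ)
      rw [smul_smul, ← pow_add]
      have : P + k = k + P := by omega
      rw [this]
    have grow : ∀ k, J ≤ k → ∀ p ∈ W, dist (y k) p < ε →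
        dist (y (k + P)) p = (q:ℝ)^P * dist (y k) p ∧ dist (y (k + P)) p < ε := by
      intro k hk p hp hd
      have heq : dist (y (k + P)) p = (q:ℝ)^P * dist (y k) p := by
        have hsm : dist ((q^P : ℕ) • y k) ((q^P : ℕ) • p) = ((q^P:ℕ):ℝ) * dist (y k) p := by
          apply ua_nsmul_dist (Nat.one_le_pow _ _ (by omega))
          rw [hcastP]
          calc dist (y k) p ≤ ε := hd.le
            _ ≤ 1/(2*(q:ℝ)^P) := hε1
        rw [hyP k, ← hPer p hp]
        rw [hsm, hcastP, hPer p hp]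
      refine ⟨heq, ?_⟩
      obtain ⟨p', hp', hd'⟩ := hyU (k + P) (by omega)
      rcases eq_or_ne p' p with rfl | hne
      · exact hd'
      · exfalso
        have h1 : ρ ≤ dist p' p := hρsep p' hp' p hp hne
        have h2 : dist p' p ≤ dist p' (y (k+P)) + dist (y (k+P)) p := dist_triangle _ _ _
        have h3 : dist p' (y (k+P)) < ε := by rw [dist_comm]; exact hd'
        have h4 : dist (y (k+P)) p < (q:ℝ)^P * ε := by
          rw [heq]
          exact mul_lt_mul_of_pos_left hd hqP0
        have h5 : ρ ≤ ε * ((q:ℝ)^P + 1) := by nlinarith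
        have h6 : ε * ((q:ℝ)^P + 1) ≤ ρ := by
          rw [← le_div_iff₀ (by positivity)]
          exact hε2
        have : dist p' (y (k+P)) + dist (y (k+P)) p < ε + (q:ℝ)^P * ε := by
          exact add_lt_add h3 h4
        nlinarith
    obtain ⟨p, hp, hdJ⟩ := hyU J le_rfl
    set dJ : ℝ := dist (y J) p with hdJdef
    have hdJpos : 0 < dJ := by
      rw [hdJdef, dist_pos]
      intro hyp
      have : q^P • y J = y J := by rw [hyp]; exact hPer p hp
      have h2 : q^(P+J) • ξ = q^J • ξ := by
        rw [pow_add, ← smul_smul]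
        exact this
      exact irr_smul_ne hq hx (by omega : J < P + J) h2
    have hgrow2 : ∀ j, dist (y (J + j*P)) p < ε ∧ dist (y (J + j*P)) p = ((q:ℝ)^P)^j * dJ := by
      intro j
      induction j with
      | zero => simpa [← hdJdef] using hdJ
      | succ j ih =>
          obtain ⟨hlt, heq⟩ := ih
          obtain ⟨heq2, hlt2⟩ := grow (J + j*P) (by omega) p hp hlt
          have hidx : J + (j+1)*P = J + j*P + P := by ring
          rw [hidx]
          refine ⟨hlt2, ?_⟩
          rw [heq2, heq]
          ring
    obtain ⟨j, hj⟩ := pow_unbounded_of_one_lt (ε / dJ) hqP1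
    obtain ⟨hlt, heq⟩ := hgrow2 j
    have : ε < ((q:ℝ)^P)^j * dJ := (div_lt_iff₀ hdJpos).mp hj
    rw [← heq] at this
    linarith
  -- collision and chain
  obtain ⟨u, hu, v, hv, huv, hquv⟩ := exists_collision hq hWcomp hWinf hTW
  have hsurjW : ∀ w, w ∈ W → ∃ v', v' ∈ W ∧ q • v' = w := by
    intro w hw
    rw [← hTW] at hw
    obtain ⟨v', hv', hqv⟩ := hw
    exact ⟨v', hv', hqv⟩
  have hstep : ∀ s : {p : UnitAddCircle × UnitAddCircle // p.1 ∈ W ∧ p.2 ∈ W},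
      ∃ s' : {p : UnitAddCircle × UnitAddCircle // p.1 ∈ W ∧ p.2 ∈ W},
        q • s'.1.1 = s.1.1 ∧ q • s'.1.2 = s.1.2 := by
    rintro ⟨⟨a, b⟩, ha, hb⟩
    obtain ⟨a', ha', hqa⟩ := hsurjW a ha
    obtain ⟨b', hb', hqb⟩ := hsurjW b hb
    exact ⟨⟨(a', b'), ha', hb'⟩, hqa, hqb⟩
  choose nxt hnxt1 hnxt2 using hstep
  set F : ℕ → {p : UnitAddCircle × UnitAddCircle // p.1 ∈ W ∧ p.2 ∈ W} :=
    fun k => Nat.rec ⟨(u, v), hu, hv⟩ (fun _ s => nxt s) k with hF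
  have hFsucc : ∀ k, F (k+1) = nxt (F k) := fun k => rfl
  set d : ℕ → UnitAddCircle := fun k => (F k).1.1 - (F k).1.2 with hd
  have hdrec : ∀ k, q • d (k+1) = d k := by
    intro k
    show q • ((F (k+1)).1.1 - (F (k+1)).1.2) = (F k).1.1 - (F k).1.2
    rw [smul_sub, hFsucc k, hnxt1, hnxt2]
  have hdne : ∀ k, d k ≠ 0 := by
    intro k
    induction k with
    | zero => exact sub_ne_zero.mpr huv
    | succ k ih =>
        intro h0
        apply ih
        rw [← hdrec k, h0, smul_zero]
  have hdtor : ∀ k, q^(k+1) • d k = 0 := by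
    intro k
    induction k with
    | zero =>
        show q^1 • ((F 0).1.1 - (F 0).1.2) = 0
        rw [pow_one, smul_sub]
        show q • u - q • v = 0
        rw [hquv, sub_self]
    | succ k ih =>
        have : q^(k+2) • d (k+1) = q^(k+1) • (q • d (k+1)) := by
          rw [smul_smul, ← pow_succ]
        rw [this, hdrec k, ih]
  have hrep : ∀ k, ∃ L : ℕ, 1 ≤ L ∧ L < q^(k+1) ∧
      d k = (((L : ℝ)/((q^(k+1) : ℕ) : ℝ) : ℝ) : UnitAddCircle) :=
    fun k => ua_torsion_rep (Nat.pow_pos (by omega)) (hdtor k) (hdne k)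
  choose L hL1 hLlt hLeq using hrep
  set ℓ : ℕ → ℕ := fun n => if 1 ≤ n then L (n-1) else 1 with hℓ
  have hℓval : ∀ n, 1 ≤ n → ℓ n = L (n-1) := by
    intro n hn
    rw [hℓ]
    simp [hn]
  have hdn : ∀ n, 1 ≤ n → (((ℓ n : ℝ) / (q:ℝ)^n : ℝ) : UnitAddCircle) = d (n-1) := by
    intro n hn
    have h1 := hLeq (n-1)
    have hsn : n - 1 + 1 = n := by omega
    rw [hsn] at h1
    rw [hℓval n hn, h1]
    congr 1
    push_cast
    ring
  have hcompat : ∀ n, 1 ≤ n →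
      q • (((ℓ (n + 1) : ℝ) / (q : ℝ) ^ (n + 1) : ℝ) : UnitAddCircle) =
        (((ℓ n : ℝ) / (q : ℝ) ^ n : ℝ) : UnitAddCircle) := by
    intro n hn
    rw [hdn (n+1) (by omega), hdn n hn]
    have h1 : (n+1) - 1 = (n-1) + 1 := by omega
    rw [h1, hdrec (n-1)]
  have hcong : ∀ n, 1 ≤ n → ∃ z : ℤ, (ℓ (n+1) : ℤ) = (ℓ n : ℤ) + z * (q:ℤ)^n := by
    intro n hn
    have h1 := hcompat n hn
    have h2 : q • ((((ℓ (n + 1) : ℝ) / (q : ℝ) ^ (n + 1)) : ℝ) : UnitAddCircle)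
        = ((((q:ℝ) * ((ℓ (n + 1) : ℝ) / (q : ℝ) ^ (n + 1))) : ℝ) : UnitAddCircle) := by
      rw [← AddCircle.coe_nsmul]
      norm_num
    have hq0 : (q:ℝ) ≠ 0 := by positivity
    have h3 : (q:ℝ) * ((ℓ (n + 1) : ℝ) / (q : ℝ) ^ (n + 1)) = (ℓ (n+1) : ℝ) / (q:ℝ)^n := by
      rw [pow_succ]
      field_simp
    rw [h2, h3] at h1
    have h4 : ((((ℓ (n+1) : ℝ) / (q:ℝ)^n - (ℓ n : ℝ) / (q:ℝ)^n) : ℝ) : UnitAddCircle) = 0 := by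
      rw [sub_eq_add_neg, AddCircle.coe_add, h1, AddCircle.coe_neg, add_neg_cancel]
    obtain ⟨z, hz⟩ := (AddCircle.coe_eq_zero_iff _).mp h4
    simp only [zsmul_eq_mul, mul_one] at hz
    refine ⟨z, ?_⟩
    have hqn0 : ((q:ℝ))^n ≠ 0 := by positivity
    have : (ℓ (n+1) : ℝ) = (ℓ n : ℝ) + (z:ℝ) * (q:ℝ)^n := by
      have := hz
      field_simp at this
      linarith [this]
    exact_mod_cast this
  have hgcdstep : ∀ n, 1 ≤ n → Nat.gcd (ℓ (n+1)) q = Nat.gcd (ℓ n) q := by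
    intro n hn
    obtain ⟨z, hz⟩ := hcong n hn
    obtain ⟨m, rfl⟩ : ∃ m, n = m + 1 := ⟨n - 1, by omega⟩
    have hmod : ℓ (m+1+1) ≡ ℓ (m+1) [MOD q] := by
      rw [Nat.modEq_iff_dvd]
      refine ⟨-z * (q:ℤ)^m, ?_⟩
      rw [hz]
      push_cast
      ring
    have h1 : ℓ (m+1+1) % q = ℓ (m+1) % q := hmod
    rw [Nat.gcd_comm (ℓ (m+1+1)) q, Nat.gcd_comm (ℓ (m+1)) q, Nat.gcd_rec q (ℓ (m+1+1)),
      Nat.gcd_rec q (ℓ (m+1)), h1]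
  have hgcdconst : ∀ n, 1 ≤ n → Nat.gcd (ℓ n) q = Nat.gcd (ℓ 1) q := by
    intro n hn
    induction n, hn using Nat.le_induction with
    | base => rfl
    | succ n hn ih => rw [hgcdstep n hn, ih]
  refine ⟨ℓ, ?_, ?_, hcompat, hgcdconst, ?_⟩
  · intro n hn
    refine ⟨by rw [hℓval n hn]; exact hL1 _, ?_⟩
    have h1 := hLlt (n-1)
    have hsn : n - 1 + 1 = n := by omega
    rw [hsn] at h1
    rw [hℓval n hn]
    omega
  · intro n hn
    rw [hdn n hn]
    exact Set.sub_mem_sub (hWS (F (n-1)).2.1) (hWS (F (n-1)).2.2)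
  · intro hprime n hn
    rw [hgcdconst n hn]
    have hdvd : Nat.gcd (ℓ 1) q ∣ q := Nat.gcd_dvd_right _ _
    rcases (Nat.Prime.eq_one_or_self_of_dvd hprime _ hdvd) with h | h
    · exact h
    · exfalso
      have hdvd1 : Nat.gcd (ℓ 1) q ∣ ℓ 1 := Nat.gcd_dvd_left _ _
      rw [h] at hdvd1
      have h1 : 1 ≤ ℓ 1 := by rw [hℓval 1 le_rfl]; exact hL1 _
      have h2 : ℓ 1 < q := by
        have := hLlt 0
        rw [hℓval 1 le_rfl]
        simpa using this
      have := Nat.le_of_dvd (by omega) hdvd1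
      omega
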